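/- Let k ∈ ℤ with k ≤ -2. The first Čech cohomology of CP¹ with coefficients in O(k), computed with the standard two-set cover {λ₀ ≠ 0}, {λ₁ ≠ 0}, i.e. the quotient of Laurent series Σ_{j∈ℤ} c_j ζ^j of homogeneity-k sections on the overlap by the sum of Taylor series Σ_{j≥0} a_j ζ^j and Σ_{j≥0} b_j ζ^{k-j} pieces holomorphic on each chart, is a complex vector space of dimension -k-1, spanned by the classes of ζ^{-1}, ζ^{-2}, ..., ζ^{k+1}. -/

import Mathlib

/-- Čech coboundaries in the two-chart model of `H¹(ℂP¹, O(k))`: formal Laurent series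
(finitely supported coefficient families `c : ℤ →₀ ℂ`) which split as `h₀ + h₁` with
`h₀ = Σ_{j ≥ 0} a_j ζ^j` holomorphic on the chart around `ζ = 0` and
`h₁ = Σ_{j ≤ k} b_j ζ^j` holomorphic (as a section of `O(k)`) on the chart around
`ζ = ∞`. -/
noncomputable def cechCoboundaries (k : ℤ) : Submodule ℂ (ℤ →₀ ℂ) where
  carrier := {c | ∃ a b : ℤ →₀ ℂ, (∀ j : ℤ, j < 0 → a j = 0) ∧
    (∀ j : ℤ, k < j → b j = 0) ∧ c = a + b}
  add_mem' := by
    rintro c d ⟨a1, b1, ha1, hb1, rfl⟩ ⟨a2, b2, ha2, hb2, rfl⟩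
    refine ⟨a1 + a2, b1 + b2, ?_, ?_, by abel⟩
    · intro j hj; simp [ha1 j hj, ha2 j hj]
    · intro j hj; simp [hb1 j hj, hb2 j hj]
  zero_mem' := ⟨0, 0, by simp, by simp, by simp⟩
  smul_mem' := by
    rintro r c ⟨a, b, ha, hb, rfl⟩
    refine ⟨r • a, r • b, ?_, ?_, by simp [smul_add]⟩
    · intro j hj; simp [ha j hj]
    · intro j hj; simp [hb j hj]

lemma cech_eq (k : ℤ) :
    cechCoboundaries k = Finsupp.supported ℂ ℂ (Set.Icc (k+1) (-1))ᶜ := by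
  ext c
  constructor
  · rintro ⟨a, b, ha, hb, rfl⟩
    rw [Finsupp.mem_supported']
    intro j hj
    simp only [Set.mem_compl_iff, Set.mem_Icc, not_not] at hj
    have h1 : a j = 0 := ha j (by omega)
    have h2 : b j = 0 := hb j (by omega)
    simp [h1, h2]
  · intro hc
    rw [Finsupp.mem_supported'] at hc
    classical
    refine ⟨c.filter (fun j => 0 ≤ j), c.filter (fun j => ¬ 0 ≤ j), ?_, ?_, ?_⟩
    · intro j hj; rw [Finsupp.filter_apply]; simp [not_le.mpr hj]
    · intro j hj
      rw [Finsupp.filter_apply]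
      by_cases h0 : 0 ≤ j
      · simp [h0]
      · simp only [h0, if_true, not_false_iff]
        exact hc j (by simp only [Set.mem_compl_iff, Set.mem_Icc, not_not]; omega)
    · rw [Finsupp.filter_pos_add_filter_neg]


lemma cech_isCompl (k : ℤ) :
    IsCompl (cechCoboundaries k)
      (Finsupp.supported ℂ ℂ (Set.Icc (k+1) (-1))) := by
  rw [cech_eq]
  constructor
  · exact Finsupp.disjoint_supported_supported disjoint_compl_left
  · rw [codisjoint_iff, ← Finsupp.supported_union, Set.compl_union_self,
      Finsupp.supported_univ]


/-- For `k ≤ -2`, the two-chart Čech model of `H¹(ℂP¹, O(k))` — the quotient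
of Laurent series on the overlap by coboundaries — is a complex vector space of dimension
`-k-1`, spanned by the classes of the monomials `ζ^{-1}, ζ^{-2}, ..., ζ^{k+1}`. -/
theorem stmt9 (k : ℤ) (hk : k ≤ -2) :
    Module.finrank ℂ ((ℤ →₀ ℂ) ⧸ cechCoboundaries k) = (-k - 1).toNat ∧
    Submodule.span ℂ
      ((fun j : ℤ => Submodule.Quotient.mk (p := cechCoboundaries k)
        (Finsupp.single j (1 : ℂ))) '' (Set.Icc (k + 1) (-1))) = ⊤ := by
  constructor
  · have e := (Submodule.quotientEquivOfIsCompl _ _ (cech_isCompl k)).trans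
      (Finsupp.supportedEquivFinsupp (M := ℂ) (R := ℂ) (Set.Icc (k+1) (-1)))
    rw [e.finrank_eq, Module.finrank_finsupp_self, Fintype.card_Icc, Int.card_Icc]
    congr 1
    omega
  · have hsurj : Function.Surjective (cechCoboundaries k).mkQ :=
      Submodule.mkQ_surjective _
    have htop : Submodule.span ℂ ((fun i : ℤ => Finsupp.single i (1:ℂ)) '' Set.univ)
        = ⊤ := by
      rw [← Finsupp.supported_eq_span_single, Finsupp.supported_univ]
    have : Submodule.span ℂ ((cechCoboundaries k).mkQ ''
        ((fun i : ℤ => Finsupp.single i (1:ℂ)) '' Set.univ)) = ⊤ := by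
      rw [← Submodule.map_span, htop, Submodule.map_top,
        Submodule.range_mkQ]
    rw [eq_top_iff, ← this, Submodule.span_le]
    rintro x ⟨y, ⟨j, -, rfl⟩, rfl⟩
    by_cases hj : j ∈ Set.Icc (k+1) (-1)
    · exact Submodule.subset_span ⟨j, hj, rfl⟩
    · have : Finsupp.single j (1:ℂ) ∈ cechCoboundaries k := by
        rw [cech_eq, Finsupp.mem_supported']
        intro i hi
        simp only [Set.mem_compl_iff, not_not] at hi
        rw [Finsupp.single_apply, if_neg]
        rintro rfl; exact hj hi
      have h0 : (cechCoboundaries k).mkQ (Finsupp.single j (1:ℂ)) = 0 :=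
        (Submodule.Quotient.mk_eq_zero _).mpr this
      simp only [h0]
      exact Submodule.zero_mem _
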